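/- Let m be a positive integer and let φ be holomorphic on a neighborhood of 0 in ℂ with φ(0) ≠ 0; fix r₀ > 0 small enough that φ is holomorphic on {|z| < r₀} and set A = {z : 0 < |z| < r₀, Im(z^{−m}·φ(z)) = log|z|}. Then: (i) 0 is an accumulation point of A, i.e. for every r ∈ (0, r₀) there exists z ∈ A with |z| < r; and (ii) there exists δ ∈ ℝ such that for every ε ∈ (0, π/(2m)) there exists r > 0 with A ∩ {0 < |z| < r} ⊆ S(m, ε, δ). (Core of Lemma P, second kind: the singular set of a g-regular parabolic end of the second kind accumulates at the end and near the end is contained in 2m thin sectors.) -/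

import Mathlib

open Complex Metric

noncomputable section

lemma im_div_pow_aux (w : ℂ) (ρ θ : ℝ) (m : ℕ) :
    (w / ((ρ:ℂ) * Complex.exp (θ * I)) ^ m).im
      = (w * Complex.exp (-(m * θ) * I)).im / ρ ^ m := by
  have h1 : ((ρ:ℂ) * Complex.exp (θ * I)) ^ m
      = ((ρ ^ m : ℝ) : ℂ) * Complex.exp ((m * θ) * I) := by
    rw [mul_pow, ← Complex.exp_nat_mul]
    push_cast
    ring_nf
  rw [h1]
  have h2 : w / (((ρ ^ m : ℝ) : ℂ) * Complex.exp ((m * θ) * I))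
      = w * Complex.exp (-(m * θ) * I) / ((ρ ^ m : ℝ) : ℂ) := by
    rw [div_mul_eq_div_div_swap, div_eq_mul_inv w, ← Complex.exp_neg]
    ring_nf
  rw [h2, Complex.div_ofReal_im]

lemma im_const_mul_exp_nat (c : ℂ) (m : ℕ) (θ : ℝ) :
    (c * Complex.exp (-(m * θ) * I)).im
      = ‖c‖ * Real.sin (Complex.arg c - m * θ) := by
  conv_lhs => rw [← Complex.norm_mul_exp_arg_mul_I c]
  rw [mul_assoc, ← Complex.exp_add]
  have h : (Complex.arg c : ℂ) * I + -(m * θ) * I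
      = ((Complex.arg c - m * θ : ℝ) : ℂ) * I := by
    push_cast; ring
  rw [h]
  simp only [Complex.mul_im, Complex.ofReal_re, Complex.ofReal_im,
    Complex.exp_ofReal_mul_I_im, zero_mul, add_zero]

lemma im_perturb (w : ℂ) (m : ℕ) (θ : ℝ) :
    |(w * Complex.exp (-(m * θ) * I)).im| ≤ ‖w‖ := by
  refine le_trans (Complex.abs_im_le_norm _) ?_
  rw [norm_mul, Complex.norm_exp]
  have : (-(m * θ : ℂ) * I).re = 0 := by simp
  rw [this, Real.exp_zero, mul_one]

lemma sin_small (ε t : ℝ) (hε : 0 < ε) (hε2 : ε ≤ Real.pi / 2)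
    (h : |Real.sin t| < Real.sin ε) : ∃ k : ℤ, |t - k * Real.pi| < ε := by
  set k : ℤ := round (t / Real.pi) with hk
  refine ⟨k, ?_⟩
  set t' := t - k * Real.pi with ht'
  have hpi := Real.pi_pos
  have ht'le : |t'| ≤ Real.pi / 2 := by
    have he : t' = (t / Real.pi - k) * Real.pi := by
      rw [ht']; field_simp
    rw [he, abs_mul, _root_.abs_of_pos hpi]
    nlinarith [abs_sub_round (t / Real.pi), abs_nonneg (t / Real.pi - (k:ℝ))]
  have hsin : |Real.sin t'| = |Real.sin t| := by
    have h3 : Real.sin t = Real.sin (t' + k * Real.pi) := by rw [ht']; ring_nf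
    rw [h3, Real.sin_add, Real.sin_int_mul_pi, mul_zero, add_zero, abs_mul,
      Real.abs_cos_int_mul_pi, mul_one]
  have habs : |Real.sin t'| = Real.sin |t'| := by
    rcases le_or_gt 0 t' with h0 | h0
    · have hle2 : t' ≤ Real.pi :=
        le_trans (le_abs_self t') (le_trans ht'le (by linarith))
      rw [_root_.abs_of_nonneg h0,
        _root_.abs_of_nonneg (Real.sin_nonneg_of_nonneg_of_le_pi h0 hle2)]
    · have h1 : -t' ≤ Real.pi := by
        have := (abs_le.mp ht'le).1; linarith
      have hnn : 0 ≤ Real.sin (-t') :=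
        Real.sin_nonneg_of_nonneg_of_le_pi (by linarith) h1
      rw [_root_.abs_of_neg h0]
      calc |Real.sin t'| = |Real.sin (-t')| := by rw [Real.sin_neg, abs_neg]
        _ = Real.sin (-t') := _root_.abs_of_nonneg hnn
  by_contra hge
  push_neg at hge
  have hle : Real.sin ε ≤ Real.sin |t'| := by
    rcases eq_or_lt_of_le hge with h' | h'
    · rw [← h']
    · exact (Real.strictMonoOn_sin ⟨by linarith, hε2⟩
        ⟨by linarith [abs_nonneg t'], ht'le⟩ h').le
  rw [← habs, hsin] at hle
  linarith

lemma pow_log_small (m : ℕ) (hm : 0 < m) (η : ℝ) (hη : 0 < η) :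
    ∃ d : ℝ, 0 < d ∧ ∀ ρ : ℝ, 0 < ρ → ρ < d → ρ ^ m * |Real.log ρ| < η := by
  have hm' : (0:ℝ) < m := by exact_mod_cast hm
  have h := _root_.tendsto_log_mul_rpow_nhdsGT_zero hm'
  have h2 : ∀ᶠ x in nhdsWithin 0 (Set.Ioi 0),
      |Real.log x * x ^ (m:ℝ)| < η := by
    have h3 := Metric.tendsto_nhds.mp h η hη
    filter_upwards [h3] with x hx
    rwa [Real.dist_eq, sub_zero] at hx
  obtain ⟨u, hu, hsub⟩ := mem_nhdsGT_iff_exists_Ioo_subset.mp h2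
  refine ⟨u, hu, fun ρ h1 h2' => ?_⟩
  have h4 : |Real.log ρ * ρ ^ (m:ℝ)| < η := hsub ⟨h1, h2'⟩
  rwa [abs_mul, mul_comm, Real.rpow_natCast, _root_.abs_of_pos (pow_pos h1 m)] at h4

/-- `z` lies in the union `S(m,ε,δ)` of the `2m` open sectors
`{kπ/m + δ − ε < arg z < kπ/m + δ + ε}` (k ∈ ℤ, i.e. arg taken mod 2π). -/
def inSectors (m : ℕ) (ε δ : ℝ) (z : ℂ) : Prop :=
  z ≠ 0 ∧ ∃ θ : ℝ, z = (‖z‖ : ℂ) * Complex.exp (θ * Complex.I) ∧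
    ∃ k : ℤ, |θ - (k * Real.pi / m + δ)| < ε

/-- Core of Lemma P (second kind): for `m ∈ ℤ₊` and `φ` holomorphic on
`{|z| < r₀}` with `φ(0) ≠ 0`, the set
`A = {0 < |z| < r₀ : Im(z^{-m} φ(z)) = log |z|}` accumulates at `0`, and
there is `δ` such that for every `ε ∈ (0, π/(2m))`, `A` near `0` is contained
in `S(m,ε,δ)`. -/
theorem parabolic_second_kind_singular_set
    (m : ℕ) (hm : 0 < m) (φ : ℂ → ℂ) (r₀ : ℝ) (hr₀ : 0 < r₀)
    (hφ : DifferentiableOn ℂ φ (ball (0 : ℂ) r₀)) (hφ0 : φ 0 ≠ 0) :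
    (∀ r : ℝ, 0 < r → r < r₀ →
      ∃ z : ℂ, 0 < ‖z‖ ∧ ‖z‖ < r₀ ∧ (φ z / z ^ m).im = Real.log ‖z‖ ∧
        ‖z‖ < r) ∧
    ∃ δ : ℝ, ∀ ε : ℝ, 0 < ε → ε < Real.pi / (2 * m) →
      ∃ r : ℝ, 0 < r ∧ ∀ z : ℂ, 0 < ‖z‖ → ‖z‖ < r₀ →
        (φ z / z ^ m).im = Real.log ‖z‖ → ‖z‖ < r → inSectors m ε δ z := by
  set c : ℂ := φ 0 with hc
  set K : ℝ := ‖c‖ with hK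
  have hKpos : 0 < K := norm_pos_iff.mpr hφ0
  have hmR : (0:ℝ) < m := by exact_mod_cast hm
  have hm1 : (1:ℝ) ≤ m := by exact_mod_cast hm
  -- continuity of φ at 0
  have hcontφ : ∀ η : ℝ, 0 < η → ∃ d : ℝ, 0 < d ∧
      ∀ z : ℂ, ‖z‖ < d → ‖φ z - c‖ < η := by
    intro η hη
    have h0 : (0:ℂ) ∈ ball (0:ℂ) r₀ := mem_ball_self hr₀
    have hcw := hφ.continuousOn 0 h0
    rw [Metric.continuousWithinAt_iff] at hcw
    obtain ⟨d, hd, hball⟩ := hcw η hη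
    refine ⟨min d r₀, lt_min hd hr₀, ?_⟩
    intro z hz
    have hz1 : z ∈ ball (0:ℂ) r₀ :=
      mem_ball_zero_iff.mpr (lt_of_lt_of_le hz (min_le_right _ _))
    have h2 := hball hz1 (by
      rw [dist_zero_right]; exact lt_of_lt_of_le hz (min_le_left _ _))
    rwa [Complex.dist_eq] at h2
  constructor
  · -- accumulation at 0
    intro r hr hrr₀
    obtain ⟨d₁, hd₁pos, hd₁⟩ := hcontφ (K/2) (by linarith)
    obtain ⟨d₂, hd₂pos, hd₂⟩ := pow_log_small m hm (K/2) (by linarith)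
    set ρ : ℝ := min r (min d₁ d₂) / 2 with hρdef
    have hρpos : 0 < ρ := by
      have : 0 < min r (min d₁ d₂) := lt_min hr (lt_min hd₁pos hd₂pos)
      positivity
    have hρr : ρ < r := by
      have h1 : min r (min d₁ d₂) ≤ r := min_le_left _ _
      simp only [hρdef]; linarith
    have hρr₀ : ρ < r₀ := lt_trans hρr hrr₀
    have hρd₁ : ρ < d₁ := by
      have h1 : min r (min d₁ d₂) ≤ d₁ :=
        le_trans (min_le_right _ _) (min_le_left _ _)
      simp only [hρdef]; linarith
    have hρd₂ : ρ < d₂ := by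
      have h1 : min r (min d₁ d₂) ≤ d₂ :=
        le_trans (min_le_right _ _) (min_le_right _ _)
      simp only [hρdef]; linarith
    have hρmpos : (0:ℝ) < ρ ^ m := pow_pos hρpos m
    -- the function on the circle of radius ρ
    set f : ℝ → ℝ :=
      fun θ => (φ ((ρ:ℂ) * Complex.exp (θ * I)) / ((ρ:ℂ) * Complex.exp (θ * I)) ^ m).im
      with hfdef
    have hznorm : ∀ θ : ℝ, ‖(ρ:ℂ) * Complex.exp (θ * I)‖ = ρ := by
      intro θ
      rw [norm_mul, Complex.norm_real, Real.norm_eq_abs,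
        Complex.norm_exp_ofReal_mul_I, mul_one,
        _root_.abs_of_pos hρpos]
    have hmap : Continuous fun θ : ℝ => (ρ:ℂ) * Complex.exp (θ * I) :=
      continuous_const.mul (Complex.continuous_exp.comp
        (Complex.continuous_ofReal.mul continuous_const))
    have hφc : Continuous fun θ : ℝ => φ ((ρ:ℂ) * Complex.exp (θ * I)) :=
      ContinuousOn.comp_continuous hφ.continuousOn hmap
        (fun θ => mem_ball_zero_iff.mpr (by rw [hznorm θ]; exact hρr₀))
    have hne : ∀ θ : ℝ, ((ρ:ℂ) * Complex.exp (θ * I)) ^ m ≠ 0 := fun θ =>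
      pow_ne_zero _ (mul_ne_zero (Complex.ofReal_ne_zero.mpr hρpos.ne')
        (Complex.exp_ne_zero _))
    have hfcont : Continuous f :=
      Complex.continuous_im.comp (hφc.div (hmap.pow m) hne)
    -- log bound
    have hlog : ρ ^ m * |Real.log ρ| < K/2 := hd₂ ρ hρpos hρd₂
    have hlog1 : Real.log ρ < (K/2) / ρ ^ m := by
      rw [lt_div_iff₀ hρmpos]
      calc Real.log ρ * ρ ^ m ≤ |Real.log ρ| * ρ ^ m := by
            exact mul_le_mul_of_nonneg_right (le_abs_self _) hρmpos.le
        _ = ρ ^ m * |Real.log ρ| := by ring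
        _ < K/2 := hlog
    have hlog2 : -((K/2) / ρ ^ m) < Real.log ρ := by
      rw [neg_lt, lt_div_iff₀ hρmpos]
      calc (-Real.log ρ) * ρ ^ m ≤ |Real.log ρ| * ρ ^ m := by
            exact mul_le_mul_of_nonneg_right (neg_le_abs _) hρmpos.le
        _ = ρ ^ m * |Real.log ρ| := by ring
        _ < K/2 := hlog
    -- the two angles
    set θp : ℝ := (Complex.arg c - Real.pi/2) / m with hθp
    set θn : ℝ := (Complex.arg c + Real.pi/2) / m with hθn
    have hmul_p : (m:ℝ) * θp = Complex.arg c - Real.pi/2 := by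
      rw [hθp]; field_simp
    have hmul_n : (m:ℝ) * θn = Complex.arg c + Real.pi/2 := by
      rw [hθn]; field_simp
    -- estimate f at θp and θn
    have hval : ∀ θ : ℝ, f θ =
        ((c * Complex.exp (-(m * θ) * I)).im
          + ((φ ((ρ:ℂ) * Complex.exp (θ * I)) - c) * Complex.exp (-(m * θ) * I)).im)
          / ρ ^ m := by
      intro θ
      rw [hfdef]
      simp only
      rw [im_div_pow_aux]
      congr 1
      rw [← Complex.add_im]
      congr 1
      ring
    have hpert : ∀ θ : ℝ,
        |((φ ((ρ:ℂ) * Complex.exp (θ * I)) - c) * Complex.exp (-(m * θ) * I)).im|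
          ≤ ‖φ ((ρ:ℂ) * Complex.exp (θ * I)) - c‖ :=
      fun θ => im_perturb _ m θ
    have hsmall : ∀ θ : ℝ,
        ‖φ ((ρ:ℂ) * Complex.exp (θ * I)) - c‖ < K/2 :=
      fun θ => hd₁ _ (by rw [hznorm θ]; exact hρd₁)
    have hfp : Real.log ρ ≤ f θp := by
      have h1 : (c * Complex.exp (-(m * θp) * I)).im = K := by
        rw [im_const_mul_exp_nat, hmul_p]
        have : Complex.arg c - (Complex.arg c - Real.pi/2) = Real.pi/2 := by ring
        rw [this, Real.sin_pi_div_two, mul_one]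
      have h2 := hpert θp
      have h3 := hsmall θp
      rw [hval θp, h1]
      have h4 : K/2 ≤ K + ((φ ((ρ:ℂ) * Complex.exp (θp * I)) - c)
          * Complex.exp (-(m * θp) * I)).im := by
        have := (abs_le.mp h2).1
        linarith
      calc Real.log ρ ≤ (K/2) / ρ ^ m := hlog1.le
        _ ≤ _ := by gcongr
    have hfn : f θn ≤ Real.log ρ := by
      have h1 : (c * Complex.exp (-(m * θn) * I)).im = -K := by
        rw [im_const_mul_exp_nat, hmul_n]
        have h5 : Complex.arg c - (Complex.arg c + Real.pi/2) = -(Real.pi/2) := by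
          ring
        rw [h5, Real.sin_neg, Real.sin_pi_div_two]
        ring
      have h2 := hpert θn
      have h3 := hsmall θn
      rw [hval θn, h1]
      have h4 : -K + ((φ ((ρ:ℂ) * Complex.exp (θn * I)) - c)
          * Complex.exp (-(m * θn) * I)).im ≤ -(K/2) := by
        have := (abs_le.mp h2).2
        linarith
      calc (-K + ((φ ((ρ:ℂ) * Complex.exp (θn * I)) - c)
              * Complex.exp (-(m * θn) * I)).im) / ρ ^ m
          ≤ (-(K/2)) / ρ ^ m := by gcongr
        _ = -((K/2) / ρ ^ m) := by rw [neg_div]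
        _ ≤ Real.log ρ := hlog2.le
    have hmem : Real.log ρ ∈ Set.uIcc (f θn) (f θp) :=
      Set.mem_uIcc.mpr (Or.inl ⟨hfn, hfp⟩)
    obtain ⟨θs, _, hθs⟩ := intermediate_value_uIcc hfcont.continuousOn hmem
    refine ⟨(ρ:ℂ) * Complex.exp (θs * I), ?_, ?_, ?_, ?_⟩
    · rw [hznorm]; exact hρpos
    · rw [hznorm]; exact hρr₀
    · rw [hznorm]; exact hθs
    · rw [hznorm]; exact hρr
  · -- sector containment
    refine ⟨Complex.arg c / m, ?_⟩
    intro ε hε hεm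
    have hπm : Real.pi / (2 * m) ≤ Real.pi / 2 := by
      apply div_le_div_of_nonneg_left Real.pi_pos.le two_pos
      linarith
    have hεhalf : ε ≤ Real.pi / 2 := le_of_lt (lt_of_lt_of_le hεm hπm)
    have hsinε : 0 < Real.sin ε := by
      apply Real.sin_pos_of_pos_of_lt_pi hε
      linarith [Real.pi_pos]
    set η : ℝ := K * Real.sin ε / 2 with hη
    have hηpos : 0 < η := by positivity
    obtain ⟨d₁, hd₁pos, hd₁⟩ := hcontφ η hηpos
    obtain ⟨d₂, hd₂pos, hd₂⟩ := pow_log_small m hm η hηpos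
    refine ⟨min d₁ d₂, lt_min hd₁pos hd₂pos, ?_⟩
    intro z hz0 hzr₀ heq hzr
    have hzne : z ≠ 0 := norm_pos_iff.mp hz0
    set ρ : ℝ := ‖z‖ with hρ
    set θ : ℝ := Complex.arg z with hθ
    have hρmpos : (0:ℝ) < ρ ^ m := pow_pos hz0 m
    have hze : z = (ρ:ℂ) * Complex.exp (θ * I) := by
      rw [hρ, hθ, Complex.norm_mul_exp_arg_mul_I]
    have him := im_div_pow_aux (φ z) ρ θ m
    rw [← hze] at him
    rw [heq] at him
    have heq2 : (φ z * Complex.exp (-(m * θ) * I)).im = Real.log ρ * ρ ^ m :=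
      (div_eq_iff hρmpos.ne').mp him.symm
    have hsplit : (φ z * Complex.exp (-(m * θ) * I)).im
        = (c * Complex.exp (-(m * θ) * I)).im
          + ((φ z - c) * Complex.exp (-(m * θ) * I)).im := by
      rw [← Complex.add_im]
      congr 1
      ring
    rw [hsplit, im_const_mul_exp_nat] at heq2
    have hB := im_perturb (φ z - c) m θ
    have hBsmall : ‖φ z - c‖ < η :=
      hd₁ z (lt_of_lt_of_le hzr (min_le_left _ _))
    have hlog : ρ ^ m * |Real.log ρ| < η :=
      hd₂ ρ hz0 (lt_of_lt_of_le hzr (min_le_right _ _))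
    have hsin_bound : K * |Real.sin (Complex.arg c - m * θ)| < K * Real.sin ε := by
      have h1 : K * Real.sin (Complex.arg c - m * θ)
          = Real.log ρ * ρ ^ m
            - ((φ z - c) * Complex.exp (-(m * θ) * I)).im := by
        linarith [heq2]
      calc K * |Real.sin (Complex.arg c - m * θ)|
          = |K * Real.sin (Complex.arg c - m * θ)| := by
            rw [abs_mul, _root_.abs_of_pos hKpos]
        _ ≤ |Real.log ρ * ρ ^ m|
            + |((φ z - c) * Complex.exp (-(m * θ) * I)).im| := by
            rw [h1]; exact abs_sub _ _
        _ < η + η := by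
            apply add_lt_add_of_le_of_lt _ (lt_of_le_of_lt hB hBsmall)
            calc |Real.log ρ * ρ ^ m| = ρ ^ m * |Real.log ρ| := by
                  rw [abs_mul, _root_.abs_of_pos hρmpos]; ring
              _ ≤ η := hlog.le
        _ = K * Real.sin ε := by rw [hη]; ring
    have hsin : |Real.sin (Complex.arg c - m * θ)| < Real.sin ε :=
      (mul_lt_mul_iff_right₀ hKpos).mp hsin_bound
    obtain ⟨k, hk⟩ := sin_small ε (Complex.arg c - m * θ) hε hεhalf hsin
    refine ⟨hzne, θ, hze, -k, ?_⟩
    have hrw : θ - ((-k : ℤ) * Real.pi / m + Complex.arg c / m)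
        = -((Complex.arg c - m * θ - k * Real.pi) / m) := by
      push_cast
      field_simp
      ring
    rw [hrw, abs_neg, abs_div, _root_.abs_of_pos hmR]
    rw [div_lt_iff₀ hmR]
    calc |Complex.arg c - ↑m * θ - ↑k * Real.pi| < ε := by
          have : Complex.arg c - ↑m * θ - ↑k * Real.pi
              = (Complex.arg c - ↑m * θ) - ↑k * Real.pi := by ring
          rw [this]; exact hk
      _ ≤ ε * m := le_mul_of_one_le_right hε.le hm1
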